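/- Let p be a prime with p ≡ 1 (mod 3) and let α ∈ 𝔽_p satisfy α² − α + 1 = 0. Then γ_p(α) = 0 in 𝔽_p. -/

import Mathlib

def mirimanoff (p : ℕ) (t : ZMod p) : ZMod p :=
  ∑ j ∈ Finset.Icc 1 (p - 1), (j : ZMod p)⁻¹ * t ^ j

lemma choose_sub_one_cast (p : ℕ) (hp : p.Prime) (k : ℕ) (hk : k ≤ p - 1) :
    ((Nat.choose (p-1) k : ZMod p)) = (-1)^k := by
  induction k with
  | zero => simp
  | succ n ih =>
    have hpos := hp.pos
    have h1 : Nat.choose p (n+1) = Nat.choose (p-1) n + Nat.choose (p-1) (n+1) := by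
      rw [← Nat.succ_pred_eq_of_pos hpos]
      exact Nat.choose_succ_succ _ _
    have hdvd : p ∣ Nat.choose p (n+1) := hp.dvd_choose_self (by omega) (by omega)
    have h0 : ((Nat.choose p (n+1) : ZMod p)) = 0 := (ZMod.natCast_eq_zero_iff _ _).2 hdvd
    rw [h1] at h0
    push_cast at h0
    rw [ih (by omega)] at h0
    have : ((Nat.choose (p-1) (n+1) : ZMod p)) = -(-1)^n := by linear_combination h0
    rw [this]; ring

lemma mul_choose_div (p j : ℕ) (hp : p.Prime) (h1 : 1 ≤ j) (h2 : j ≤ p - 1) :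
    j * (Nat.choose p j / p) = Nat.choose (p-1) (j-1) := by
  have hdvd : p ∣ Nat.choose p j := hp.dvd_choose_self (by omega) (by omega)
  have hkey : p * Nat.choose (p-1) (j-1) = Nat.choose p j * j := by
    have := Nat.add_one_mul_choose_eq (p-1) (j-1)
    have e1 : p - 1 + 1 = p := by omega
    have e2 : j - 1 + 1 = j := by omega
    rwa [e1, e2] at this
  obtain ⟨c, hc⟩ := hdvd
  rw [hc, Nat.mul_div_cancel_left _ hp.pos]
  apply Nat.eq_of_mul_eq_mul_left hp.pos
  rw [hkey, hc]; ring

lemma inv_eq_choose (p j : ℕ) (hp : p.Prime) (h1 : 1 ≤ j) (h2 : j ≤ p - 1) :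
    ((j : ZMod p))⁻¹ = -(-1)^j * ((Nat.choose p j / p : ℕ) : ZMod p) := by
  have hmul := congrArg (Nat.cast : ℕ → ZMod p) (mul_choose_div p j hp h1 h2)
  push_cast at hmul
  rw [choose_sub_one_cast p hp (j-1) (by omega)] at hmul
  have hsign : -(-1 : ZMod p)^j = (-1)^(j-1) := by
    have hstep : (-1 : ZMod p)^j = (-1)^(j-1) * (-1) := by
      rw [← pow_succ]; congr 1; omega
    rw [hstep]; ring
  haveI := Fact.mk hp
  apply inv_eq_of_mul_eq_one_right
  calc (j : ZMod p) * (-(-1)^j * ((Nat.choose p j / p : ℕ) : ZMod p))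
      = ((j : ZMod p) * ((Nat.choose p j / p : ℕ) : ZMod p)) * (-(-1)^j) := by ring
    _ = (-1)^(j-1) * (-1)^(j-1) := by rw [hmul, hsign]
    _ = 1 := by rw [← pow_add]; exact Even.neg_one_pow ⟨j-1, by ring⟩

lemma int_sum (p : ℕ) (hp : p.Prime) (hodd : p % 2 = 1) (a : ℤ) :
    (p:ℤ) * ∑ j ∈ Finset.Icc 1 (p-1), (-1)^j * (Nat.choose p j / p : ℕ) * a^j
      = (1-a)^p - 1 + a^p := by
  have hp2 := hp.two_le
  have hset : Finset.range (p+1) = insert 0 (insert p (Finset.Icc 1 (p-1))) := by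
    ext x; simp only [Finset.mem_Icc, Finset.mem_range, Finset.mem_insert]; omega
  have hb := add_pow (-a) 1 p
  rw [hset, Finset.sum_insert (by simp [Finset.mem_Icc]; omega),
    Finset.sum_insert (by simp [Finset.mem_Icc]; omega)] at hb
  simp only [one_pow, mul_one, pow_zero, one_mul, Nat.choose_zero_right, Nat.choose_self,
    Nat.cast_one] at hb
  have hnegpow : (-a)^p = -a^p := Odd.neg_pow (Nat.odd_iff.2 hodd) a
  rw [hnegpow, (by ring : (-a + 1 : ℤ) = 1 - a)] at hb
  rw [Finset.mul_sum]
  have hterm : ∀ j ∈ Finset.Icc 1 (p-1),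
      (p:ℤ) * ((-1)^j * (Nat.choose p j / p : ℕ) * a^j) = (-a)^j * (Nat.choose p j : ℤ) := by
    intro j hj
    rw [Finset.mem_Icc] at hj
    have hj1 : j ≠ 0 := by omega
    have hj2 : j < p := by omega
    obtain ⟨c, hc⟩ := hp.dvd_choose_self hj1 hj2
    have hcdiv : Nat.choose p j / p = c := by rw [hc, Nat.mul_div_cancel_left _ hp.pos]
    rw [hcdiv, hc]; push_cast; ring
  rw [Finset.sum_congr rfl hterm]
  linear_combination -hb

lemma mirimanoff_alt (p : ℕ) (hp : p.Prime) (t : ZMod p) :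
    mirimanoff p t = -∑ j ∈ Finset.Icc 1 (p-1),
      (-1)^j * ((Nat.choose p j / p : ℕ) : ZMod p) * t^j := by
  unfold mirimanoff
  rw [← Finset.sum_neg_distrib]
  apply Finset.sum_congr rfl
  intro j hj
  rw [Finset.mem_Icc] at hj
  rw [inv_eq_choose p j hp hj.1 hj.2]
  ring

lemma mirimanoff_symm (p : ℕ) (hp : p.Prime) (hodd : p % 2 = 1) (α : ZMod p) :
    mirimanoff p α = mirimanoff p (1 - α) := by
  haveI := Fact.mk hp
  set a : ℤ := (α.val : ℤ) with ha_def
  have ha : ((a : ℤ) : ZMod p) = α := by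
    rw [ha_def]; push_cast; simp [ZMod.natCast_val, ZMod.cast_id]
  have hpne : (p : ℤ) ≠ 0 := by exact_mod_cast hp.ne_zero
  have h1 := int_sum p hp hodd a
  have h2 := int_sum p hp hodd (1 - a)
  have hmulEq : (p:ℤ) * ∑ j ∈ Finset.Icc 1 (p-1), (-1)^j * (Nat.choose p j / p : ℕ) * a^j
      = (p:ℤ) * ∑ j ∈ Finset.Icc 1 (p-1), (-1)^j * (Nat.choose p j / p : ℕ) * (1-a)^j := by
    rw [h1, h2]; ring
  have hZ := mul_left_cancel₀ hpne hmulEq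
  have hcast := congrArg (Int.cast : ℤ → ZMod p) hZ
  simp only [Int.cast_sum, Int.cast_mul, Int.cast_pow, Int.cast_neg, Int.cast_one,
    Int.cast_natCast, Int.cast_sub] at hcast
  rw [ha] at hcast
  rw [mirimanoff_alt p hp, mirimanoff_alt p hp, hcast]

theorem mirimanoff_sixth_root (p : ℕ) (hp : p.Prime) (h3 : p % 3 = 1)
    (α : ZMod p) (hα : α ^ 2 - α + 1 = 0) :
    mirimanoff p α = 0 := by
  haveI := Fact.mk hp
  have hp2 := hp.two_le
  have hne2 : p ≠ 2 := by rintro rfl; simp at h3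
  have hodd : p % 2 = 1 := (hp.eq_two_or_odd).resolve_left hne2
  have hp6 : p % 6 = 1 := by omega
  have hne3 : p ≠ 3 := by rintro rfl; simp at h3
  have h3ne : (3 : ZMod p) ≠ 0 := by
    intro h
    have : ((3 : ℕ) : ZMod p) = 0 := by exact_mod_cast h
    have := (ZMod.natCast_eq_zero_iff 3 p).1 this
    exact hne3 ((Nat.prime_dvd_prime_iff_eq hp Nat.prime_three).1 this)
  have hα0 : α ≠ 0 := by
    rintro rfl
    simp only [ne_eq, zero_pow, OfNat.ofNat_ne_zero, not_false_eq_true, sub_zero, zero_add] at hα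
    exact one_ne_zero hα
  have hinv : α⁻¹ = 1 - α := by
    apply inv_eq_of_mul_eq_one_right
    linear_combination -hα
  have hα6 : α^6 = 1 := by linear_combination (α^4 + α^3 - α - 1) * hα
  have hβ : (1-α)^2 - (1-α) + 1 = 0 := by linear_combination hα
  have hβ6 : (1-α)^6 = 1 := by linear_combination ((1-α)^4 + (1-α)^3 - (1-α) - 1) * hβ
  have hβ0 : (1-α) ≠ 0 := by
    intro h
    rw [h] at hβ
    simp only [ne_eq, zero_pow, OfNat.ofNat_ne_zero, not_false_eq_true, sub_zero, zero_add] at hβ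
    exact one_ne_zero hβ
  have hβinv : (1-α)⁻¹ = α := by
    apply inv_eq_of_mul_eq_one_right
    linear_combination -hα
  have hpe : p = 6 * (p/6) + 1 := by omega
  have hβp : (1-α)^p = 1-α := by
    calc (1-α)^p = (1-α)^(6*(p/6)+1) := congrArg ((1-α) ^ ·) hpe
    _ = 1-α := by rw [pow_succ, pow_mul, hβ6, one_pow, one_mul]
  -- reindexing j ↦ p - j
  have hre : mirimanoff p α = -α * mirimanoff p (1 - α) := by
    unfold mirimanoff
    rw [Finset.mul_sum]
    apply Finset.sum_nbij' (i := fun j => p - j) (j := fun j => p - j)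
    · intro j hj; rw [Finset.mem_Icc] at hj ⊢; omega
    · intro j hj; rw [Finset.mem_Icc] at hj ⊢; omega
    · intro j hj; rw [Finset.mem_Icc] at hj; omega
    · intro j hj; rw [Finset.mem_Icc] at hj; omega
    · intro j hj
      rw [Finset.mem_Icc] at hj
      have hcastpj : (((p - j : ℕ)) : ZMod p) = -(j : ZMod p) := by
        push_cast [Nat.cast_sub (by omega : j ≤ p)]
        simp [ZMod.natCast_self]
      have hpow : (1-α)^(p-j) = (1-α) * α^j := by
        have hja : (1-α)^j ≠ 0 := pow_ne_zero _ hβ0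
        have hsplit : (1-α)^(p-j) * (1-α)^j = 1-α := by
          rw [← pow_add, (by omega : p - j + j = p), hβp]
        have := eq_div_of_mul_eq hja hsplit
        rwa [div_eq_mul_inv, ← inv_pow, hβinv] at this
      rw [hcastpj, hpow, inv_neg]
      linear_combination ((j : ZMod p)⁻¹ * α ^ j) * hα
  have hsym := mirimanoff_symm p hp hodd α
  rw [← hsym] at hre
  have hfinal : (1 + α) * mirimanoff p α = 0 := by linear_combination hre
  rcases mul_eq_zero.1 hfinal with h | h
  · exfalso
    apply h3ne
    have hαeq : α = -1 := by linear_combination h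
    rw [hαeq] at hα
    linear_combination hα
  · exact h
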